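/- Let A be the bounded operator on ℓ²(ℕ × ℤ) given by (A f)(n, k) = f(n, k − 1) (a countable orthogonal direct sum of bilateral shifts), let S be the unilateral shift on ℓ²(ℕ) given by (S f)(0) = 0 and (S f)(k) = f(k − 1) for k ≥ 1, and let B = A ⊕ S act on the Hilbert direct sum ℓ²(ℕ × ℤ) ⊕ ℓ²(ℕ). Then A is unitary, B is not unitary (so A and B are not unitarily equivalent), and yet A ≈ B: there exist linear isometries Ω : ℓ²(ℕ × ℤ) → ℓ²(ℕ × ℤ) ⊕ ℓ²(ℕ) and Ω' : ℓ²(ℕ × ℤ) ⊕ ℓ²(ℕ) → ℓ²(ℕ × ℤ) with Ω∘A = B∘Ω and Ω'∘B = A∘Ω'. -/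

import Mathlib

open ContinuousLinearMap
open scoped ENNReal

section myHelpers

open Function

variable {I J : Type*}

private lemma myTwo_toReal : (2 : ℝ≥0∞).toReal = 2 := by simp

private lemma myExtend_norm_sq (σ : I → J) (hσ : Function.Injective σ) (f : I → ℂ) :
    (fun j => ‖Function.extend σ f 0 j‖ ^ (2:ℝ)) =
      Function.extend σ (fun i => ‖f i‖ ^ (2:ℝ)) 0 := by
  funext j
  by_cases h : ∃ i, σ i = j
  · obtain ⟨i, rfl⟩ := h
    rw [hσ.extend_apply, hσ.extend_apply]
  · rw [Function.extend_apply' _ _ _ h, Function.extend_apply' _ _ _ h]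
    simp [Real.zero_rpow]

private lemma myMemℓp_extend (σ : I → J) (hσ : Function.Injective σ)
    (f : lp (fun _ : I => ℂ) 2) : Memℓp (Function.extend σ (⇑f) 0) 2 := by
  apply memℓp_gen
  rw [myTwo_toReal, myExtend_norm_sq σ hσ]
  refine (summable_extend_zero hσ).2 ?_
  simpa [myTwo_toReal] using (lp.memℓp f).summable (by norm_num [myTwo_toReal])

noncomputable def myLpExt (σ : I → J) (hσ : Function.Injective σ) :
    lp (fun _ : I => ℂ) 2 →ₗᵢ[ℂ] lp (fun _ : J => ℂ) 2 where
  toLinearMap :=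
  { toFun := fun f => ⟨Function.extend σ (⇑f) 0, myMemℓp_extend σ hσ f⟩
    map_add' := fun f g => by
      apply lp.ext
      funext j
      show Function.extend σ (⇑(f+g)) 0 j
        = Function.extend σ (⇑f) 0 j + Function.extend σ (⇑g) 0 j
      by_cases h : ∃ i, σ i = j
      · obtain ⟨i, rfl⟩ := h
        simp only [hσ.extend_apply, lp.coeFn_add, Pi.add_apply]
      · rw [Function.extend_apply' _ _ _ h, Function.extend_apply' _ _ _ h,
          Function.extend_apply' _ _ _ h]
        simp
    map_smul' := fun c f => by
      apply lp.ext
      funext j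
      show Function.extend σ (⇑(c • f)) 0 j = c • Function.extend σ (⇑f) 0 j
      by_cases h : ∃ i, σ i = j
      · obtain ⟨i, rfl⟩ := h
        simp only [hσ.extend_apply, lp.coeFn_smul, Pi.smul_apply]
      · rw [Function.extend_apply' _ _ _ h, Function.extend_apply' _ _ _ h]
        simp }
  norm_map' := fun f => by
    have h2 : (0:ℝ) < (2:ℝ≥0∞).toReal := by norm_num [myTwo_toReal]
    have hL := lp.hasSum_norm h2
      (⟨Function.extend σ (⇑f) 0, myMemℓp_extend σ hσ f⟩ : lp (fun _ : J => ℂ) 2)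
    have hR : HasSum (fun j => ‖Function.extend σ (⇑f) 0 j‖ ^ (2:ℝ≥0∞).toReal)
        (‖f‖ ^ (2:ℝ≥0∞).toReal) := by
      rw [myTwo_toReal, myExtend_norm_sq σ hσ]
      refine (hasSum_extend_zero hσ).2 ?_
      simpa [myTwo_toReal] using lp.hasSum_norm h2 f
    have h := hL.unique hR
    exact Real.rpow_left_injOn (by norm_num [myTwo_toReal])
      (lp.norm_nonneg' _) (norm_nonneg _) h

lemma myLpExt_apply (σ : I → J) (hσ : Function.Injective σ) (f : lp (fun _ : I => ℂ) 2) :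
    ⇑(myLpExt σ hσ f) = Function.extend σ (⇑f) 0 := rfl

lemma myLpExt_equiv_surj (e : I ≃ J) :
    Function.Surjective (myLpExt e e.injective) := by
  intro g
  have mem : Memℓp (fun i => g (e i)) 2 := by
    apply memℓp_gen
    exact ((lp.memℓp g).summable (by norm_num [myTwo_toReal])).comp_injective e.injective
  refine ⟨⟨_, mem⟩, ?_⟩
  apply lp.ext
  funext j
  show Function.extend e (fun i => g (e i)) 0 j = g j
  calc Function.extend e (fun i => g (e i)) 0 j
      = Function.extend e (fun i => g (e i)) 0 (e (e.symm j)) := by rw [e.apply_symm_apply]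
    _ = g (e (e.symm j)) := e.injective.extend_apply _ _ _
    _ = g j := by rw [e.apply_symm_apply]

end myHelpers

private def myEShift : (ℕ × ℤ) ≃ (ℕ × ℤ) :=
  Equiv.prodCongr (Equiv.refl ℕ) (Equiv.addRight (1:ℤ))

noncomputable def myAIso : lp (fun _ : ℕ × ℤ => ℂ) 2 ≃ₗᵢ[ℂ] lp (fun _ : ℕ × ℤ => ℂ) 2 :=
  LinearIsometryEquiv.ofSurjective (myLpExt myEShift myEShift.injective)
    (myLpExt_equiv_surj myEShift)

lemma myAIso_apply (f : lp (fun _ : ℕ × ℤ => ℂ) 2) (n : ℕ) (k : ℤ) :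
    (myAIso f : ℕ × ℤ → ℂ) (n, k) = (f : ℕ × ℤ → ℂ) (n, k - 1) := by
  have h : ((n, k) : ℕ × ℤ) = myEShift (n, k - 1) := by
    simp [myEShift]
  show Function.extend myEShift (⇑f) 0 (n, k) = (f : ℕ × ℤ → ℂ) (n, k - 1)
  rw [h, myEShift.injective.extend_apply]

private def mySig1 : ℕ × ℤ → ℕ × ℤ := fun p => (p.1 + 1, p.2)
private def mySig2 : ℕ → ℕ × ℤ := fun m => (0, (m : ℤ))

private lemma myInj1 : Function.Injective mySig1 := by
  intro p q h
  simp only [mySig1, Prod.ext_iff] at h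
  exact Prod.ext (by omega) h.2

private lemma myInj2 : Function.Injective mySig2 := by
  intro a b h
  simpa [mySig2] using h

private lemma myNotRange1 (k : ℤ) : ¬∃ p, mySig1 p = ((0:ℕ), k) := by
  rintro ⟨p, h⟩
  simp only [mySig1, Prod.ext_iff] at h
  omega

private lemma myNotRange2 (n : ℕ) (k : ℤ) : ¬∃ m, mySig2 m = (n + 1, k) := by
  rintro ⟨m, h⟩
  simp only [mySig2, Prod.ext_iff] at h
  omega

private lemma myNotRange2' (m : ℕ) : ¬∃ m', mySig2 m' = ((0:ℕ), Int.negSucc m) := by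
  rintro ⟨m', h⟩
  simp only [mySig2, Prod.ext_iff] at h
  rw [Int.negSucc_eq] at h
  omega

/-- Let `A` on `ℓ²(ℕ × ℤ)` be given by `(A f)(n, k) = f(n, k − 1)` (a countable direct sum of
bilateral shifts), `S` the unilateral shift on `ℓ²(ℕ)`, and `B = A ⊕ S` on
`ℓ²(ℕ × ℤ) ⊕ ℓ²(ℕ)`. Then `A` is unitary, `B` is not unitary (so `A` and `B` are not unitarily
equivalent), and yet `A ≈ B`. -/
theorem stmt_12
    (A : lp (fun _ : ℕ × ℤ => ℂ) 2 →L[ℂ] lp (fun _ : ℕ × ℤ => ℂ) 2)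
    (hA : ∀ (f : lp (fun _ : ℕ × ℤ => ℂ) 2) (n : ℕ) (k : ℤ), (A f : ℕ × ℤ → ℂ) (n, k) = (f : ℕ × ℤ → ℂ) (n, k - 1))
    (S : lp (fun _ : ℕ => ℂ) 2 →L[ℂ] lp (fun _ : ℕ => ℂ) 2)
    (hS0 : ∀ f : lp (fun _ : ℕ => ℂ) 2, (S f : ℕ → ℂ) 0 = 0)
    (hS : ∀ (f : lp (fun _ : ℕ => ℂ) 2) (k : ℕ), (S f : ℕ → ℂ) (k + 1) = (f : ℕ → ℂ) k)
    (B : WithLp 2 (lp (fun _ : ℕ × ℤ => ℂ) 2 × lp (fun _ : ℕ => ℂ) 2) →L[ℂ]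
         WithLp 2 (lp (fun _ : ℕ × ℤ => ℂ) 2 × lp (fun _ : ℕ => ℂ) 2))
    (hB : ∀ x, WithLp.equiv 2 _ (B x) =
      (A (WithLp.equiv 2 _ x).1, S (WithLp.equiv 2 _ x).2)) :
    -- `A` is unitary, `B` is not
    A ∈ unitary (lp (fun _ : ℕ × ℤ => ℂ) 2 →L[ℂ] lp (fun _ : ℕ × ℤ => ℂ) 2) ∧
    B ∉ unitary (WithLp 2 (lp (fun _ : ℕ × ℤ => ℂ) 2 × lp (fun _ : ℕ => ℂ) 2) →L[ℂ]
         WithLp 2 (lp (fun _ : ℕ × ℤ => ℂ) 2 × lp (fun _ : ℕ => ℂ) 2)) ∧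
    -- `A` and `B` are not unitarily equivalent
    (¬ ∃ W : lp (fun _ : ℕ × ℤ => ℂ) 2 ≃ₗᵢ[ℂ]
        WithLp 2 (lp (fun _ : ℕ × ℤ => ℂ) 2 × lp (fun _ : ℕ => ℂ) 2),
      ∀ x, W (A x) = B (W x)) ∧
    -- and yet `A ≈ B`
    (∃ Ω : lp (fun _ : ℕ × ℤ => ℂ) 2 →ₗᵢ[ℂ]
        WithLp 2 (lp (fun _ : ℕ × ℤ => ℂ) 2 × lp (fun _ : ℕ => ℂ) 2),
      ∀ x, Ω (A x) = B (Ω x)) ∧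
    (∃ Ω' : WithLp 2 (lp (fun _ : ℕ × ℤ => ℂ) 2 × lp (fun _ : ℕ => ℂ) 2) →ₗᵢ[ℂ]
        lp (fun _ : ℕ × ℤ => ℂ) 2,
      ∀ x, Ω' (B x) = A (Ω' x)) := by
  -- A is the CLM of the isometric equivalence myAIso
  have hAeq : A = (myAIso : lp (fun _ : ℕ × ℤ => ℂ) 2 →L[ℂ] lp (fun _ : ℕ × ℤ => ℂ) 2) := by
    refine ContinuousLinearMap.ext fun f => ?_
    apply lp.ext
    funext j
    obtain ⟨n, k⟩ := j
    rw [hA]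
    exact (myAIso_apply f n k).symm
  -- B misses the vector (0, e₀)
  set y0 := (WithLp.equiv 2 (lp (fun _ : ℕ × ℤ => ℂ) 2 × lp (fun _ : ℕ => ℂ) 2)).symm
    (0, lp.single 2 0 1) with hy0
  have hBne : ∀ x, B x ≠ y0 := by
    intro x hx
    have h2 := hB x
    rw [hx, hy0, Equiv.apply_symm_apply] at h2
    have h3 : (lp.single 2 (0:ℕ) (1:ℂ)) = S ((WithLp.equiv 2 _) x).2 :=
      congrArg Prod.snd h2
    have h4 : (lp.single 2 (0:ℕ) (1:ℂ) : ℕ → ℂ) 0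
        = (S ((WithLp.equiv 2 _) x).2 : ℕ → ℂ) 0 := by rw [h3]
    rw [hS0, lp.single_apply_self] at h4
    exact one_ne_zero h4
  have hBnotsurj : ¬ Function.Surjective B := by
    intro hs
    obtain ⟨x, hx⟩ := hs y0
    exact hBne x hx
  refine ⟨?_, ?_, ?_, ?_, ?_⟩
  · -- A unitary
    rw [hAeq]
    have := (Unitary.linearIsometryEquiv.symm myAIso).prop
    simpa using this
  · -- B not unitary
    intro hu
    apply hBnotsurj
    intro y
    refine ⟨(star B) y, ?_⟩
    have hms := Unitary.mul_star_self_of_mem hu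
    calc B (star B y) = (B * star B) y := rfl
      _ = y := by rw [hms]; rfl
  · -- no unitary equivalence
    rintro ⟨W, hW⟩
    apply hBnotsurj
    intro y
    refine ⟨W (myAIso.symm (W.symm y)), ?_⟩
    rw [← hW]
    have hz : A (myAIso.symm (W.symm y)) = W.symm y := by
      rw [hAeq]
      simp
    rw [hz, W.apply_symm_apply]
  · -- Ω : A ≼ B
    refine ⟨⟨(WithLp.linearEquiv 2 ℂ _).symm.toLinearMap.comp
      (LinearMap.inl ℂ _ _), ?_⟩, ?_⟩
    · intro x
      exact WithLp.norm_toLp_fst 2 _ _ x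
    · intro x
      apply (WithLp.equiv 2 _).injective
      rw [hB]
      refine Prod.ext ?_ ?_
      · rfl
      · exact (map_zero S).symm
  · -- Ω' : B ≼ A
    refine ⟨⟨(myLpExt mySig1 myInj1).toLinearMap.comp
        ((LinearMap.fst ℂ _ _).comp (WithLp.linearEquiv 2 ℂ _).toLinearMap)
      + (myLpExt mySig2 myInj2).toLinearMap.comp
        ((LinearMap.snd ℂ _ _).comp (WithLp.linearEquiv 2 ℂ _).toLinearMap), ?_⟩, ?_⟩
    · intro x
      set f := ((WithLp.equiv 2 _) x).1 with hf
      set g := ((WithLp.equiv 2 _) x).2 with hg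
      show ‖myLpExt mySig1 myInj1 f + myLpExt mySig2 myInj2 g‖ = ‖x‖
      have h2 : (0:ℝ) < (2:ℝ≥0∞).toReal := by norm_num [myTwo_toReal]
      have hpt : (fun j => ‖((myLpExt mySig1 myInj1 f + myLpExt mySig2 myInj2 g : lp (fun _ : ℕ × ℤ => ℂ) 2) : ℕ × ℤ → ℂ) j‖ ^ (2:ℝ≥0∞).toReal)
          = (fun j => ‖(myLpExt mySig1 myInj1 f : ℕ × ℤ → ℂ) j‖ ^ (2:ℝ≥0∞).toReal)
            + (fun j => ‖(myLpExt mySig2 myInj2 g : ℕ × ℤ → ℂ) j‖ ^ (2:ℝ≥0∞).toReal) := by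
        funext j
        obtain ⟨n, k⟩ := j
        rw [lp.coeFn_add, Pi.add_apply, Pi.add_apply]
        match n with
        | 0 =>
          rw [myLpExt_apply mySig1, Function.extend_apply' _ _ _ (myNotRange1 k)]
          simp [myTwo_toReal, Real.zero_rpow]
        | n+1 =>
          rw [myLpExt_apply mySig2, Function.extend_apply' _ _ _ (myNotRange2 n k)]
          simp [myTwo_toReal, Real.zero_rpow]
      have hs1 : HasSum (fun j => ‖(myLpExt mySig1 myInj1 f : ℕ × ℤ → ℂ) j‖ ^ (2:ℝ≥0∞).toReal)
          (‖f‖ ^ (2:ℝ≥0∞).toReal) := by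
        have := lp.hasSum_norm h2 (myLpExt mySig1 myInj1 f)
        rwa [(myLpExt mySig1 myInj1).norm_map] at this
      have hs2 : HasSum (fun j => ‖(myLpExt mySig2 myInj2 g : ℕ × ℤ → ℂ) j‖ ^ (2:ℝ≥0∞).toReal)
          (‖g‖ ^ (2:ℝ≥0∞).toReal) := by
        have := lp.hasSum_norm h2 (myLpExt mySig2 myInj2 g)
        rwa [(myLpExt mySig2 myInj2).norm_map] at this
      have hsum : HasSum (fun j => ‖((myLpExt mySig1 myInj1 f + myLpExt mySig2 myInj2 g : lp (fun _ : ℕ × ℤ => ℂ) 2) : ℕ × ℤ → ℂ) j‖ ^ (2:ℝ≥0∞).toReal)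
          (‖f‖ ^ (2:ℝ≥0∞).toReal + ‖g‖ ^ (2:ℝ≥0∞).toReal) := by
        rw [hpt]
        exact hs1.add hs2
      have hL := lp.hasSum_norm h2 (myLpExt mySig1 myInj1 f + myLpExt mySig2 myInj2 g)
      have heq := hL.unique hsum
      have hcast : ∀ a : ℝ, a ^ (2:ℝ≥0∞).toReal = a ^ 2 := by
        intro a
        rw [myTwo_toReal, show (2:ℝ) = ((2:ℕ):ℝ) by norm_num, Real.rpow_natCast]
      rw [hcast, hcast, hcast] at heq
      have hx : ‖x‖ ^ 2 = ‖f‖ ^ 2 + ‖g‖ ^ 2 := by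
        rw [WithLp.prod_norm_sq_eq_of_L2]
        rfl
      rw [← hx] at heq
      have h3 := congrArg Real.sqrt heq
      rwa [Real.sqrt_sq (norm_nonneg _), Real.sqrt_sq (norm_nonneg _)] at h3
    · intro x
      set f := ((WithLp.equiv 2 _) x).1 with hf
      set g := ((WithLp.equiv 2 _) x).2 with hg
      have hBf : ((WithLp.equiv 2 _) (B x)).1 = A f := by rw [hB x]
      have hBg : ((WithLp.equiv 2 _) (B x)).2 = S g := by rw [hB x]
      show myLpExt mySig1 myInj1 ((WithLp.equiv 2 _) (B x)).1
          + myLpExt mySig2 myInj2 ((WithLp.equiv 2 _) (B x)).2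
        = A (myLpExt mySig1 myInj1 f + myLpExt mySig2 myInj2 g)
      rw [hBf, hBg]
      apply lp.ext
      funext j
      obtain ⟨n, k⟩ := j
      rw [lp.coeFn_add, Pi.add_apply, hA, lp.coeFn_add, Pi.add_apply]
      match n with
      | 0 =>
        rw [myLpExt_apply mySig1, myLpExt_apply mySig1, myLpExt_apply mySig2,
          myLpExt_apply mySig2, Function.extend_apply' _ _ _ (myNotRange1 k),
          Function.extend_apply' _ _ _ (myNotRange1 (k-1))]
        simp only [Pi.zero_apply, zero_add]
        match k with
        | Int.ofNat 0 =>
          have h1 : ((0:ℕ), ((Int.ofNat 0) : ℤ)) = mySig2 0 := rfl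
          rw [h1, myInj2.extend_apply, hS0]
          have h2 : (Int.ofNat 0 : ℤ) - 1 = Int.negSucc 0 := by decide
          rw [h2, Function.extend_apply' _ _ _ (myNotRange2' 0)]
          rfl
        | Int.ofNat (m+1) =>
          have h1 : ((0:ℕ), ((Int.ofNat (m+1)) : ℤ)) = mySig2 (m+1) := rfl
          rw [h1, myInj2.extend_apply, hS]
          have h2 : ((Int.ofNat (m+1)) : ℤ) - 1 = (m : ℤ) := by
            simp only [Int.ofNat_eq_natCast]
            push_cast
            ring
          have h3 : (((0:ℕ), ((Int.ofNat (m+1)) : ℤ) - 1) : ℕ × ℤ) = mySig2 m := by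
            rw [h2]; rfl
          rw [h3, myInj2.extend_apply]
        | Int.negSucc m =>
          rw [Function.extend_apply' _ _ _ (myNotRange2' m)]
          have h2 : (Int.negSucc m) - 1 = Int.negSucc (m+1) := by
            rw [Int.negSucc_eq, Int.negSucc_eq]
            push_cast
            ring
          rw [h2, Function.extend_apply' _ _ _ (myNotRange2' (m+1))]
          rfl
      | n+1 =>
        rw [myLpExt_apply mySig2, myLpExt_apply mySig2,
          Function.extend_apply' _ _ _ (myNotRange2 n k),
          Function.extend_apply' _ _ _ (myNotRange2 n (k-1))]
        simp only [Pi.zero_apply, add_zero]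
        have h1 : (((n+1:ℕ), k) : ℕ × ℤ) = mySig1 (n, k) := rfl
        have h2 : (((n+1:ℕ), k - 1) : ℕ × ℤ) = mySig1 (n, k - 1) := rfl
        rw [myLpExt_apply mySig1, myLpExt_apply mySig1, h1, h2,
          myInj1.extend_apply, myInj1.extend_apply, hA]
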